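/- Let 𝔥 be a complex Hilbert space with anti-unitary involution Γ, P a basis projection with range 𝔭, and 𝔮 a closed Γ-invariant subspace with orthogonal projection Q such that 𝔭 and 𝔮 are in generic position. In the fermionic Fock representation over P, the vacuum vector Ω is cyclic for the von Neumann algebra M(𝔮) generated by {a(q) : q ∈ 𝔮} if and only if P𝔮 is dense in 𝔭, and Ω is separating for M(𝔮) if and only if P(𝔮^⊥) is dense in 𝔭. -/

import Mathlib

open scoped ComplexInnerProductSpace

namespace CARaux

variable {E F : Type*} [NormedAddCommGroup E] [InnerProductSpace ℂ E] [CompleteSpace E]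
  [NormedAddCommGroup F] [InnerProductSpace ℂ F] [CompleteSpace F]

lemma list_prod_mem_centralizer {A : Type*} [Monoid A] {T : Set A} :
    ∀ (ls : List A), (∀ l ∈ ls, l ∈ Set.centralizer T) → ls.prod ∈ Set.centralizer T := by
  intro ls
  induction ls with
  | nil => intro _; simpa using Set.one_mem_centralizer
  | cons l ls ih =>
    intro h
    rw [List.prod_cons]
    exact Set.mul_mem_centralizer (h l (List.mem_cons_self))
      (ih fun u hu => h u (List.mem_cons_of_mem _ hu))

structure Setup (E F : Type*) [NormedAddCommGroup E] [InnerProductSpace ℂ E] [CompleteSpace E]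
    [NormedAddCommGroup F] [InnerProductSpace ℂ F] [CompleteSpace F] where
  Γ : E → E
  P : E →L[ℂ] E
  a : E → (F →L[ℂ] F)
  Ω : F
  hΓ_add : ∀ x y, Γ (x + y) = Γ x + Γ y
  hΓ_smul : ∀ (c : ℂ) (x : E), Γ (c • x) = (starRingEnd ℂ) c • Γ x
  hΓ_inner : ∀ f h : E, ⟪Γ f, Γ h⟫ = ⟪h, f⟫
  hΓ_inv : ∀ x, Γ (Γ x) = x
  hP_proj : P ∘L P = P
  hP_sa : IsSelfAdjoint P
  hP_basis : ∀ x, P x + Γ (P (Γ x)) = x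
  ha_add : ∀ f g, a (f + g) = a f + a g
  ha_smul : ∀ (c : ℂ) (f : E), a (c • f) = (starRingEnd ℂ) c • a f
  ha_star : ∀ f, ContinuousLinearMap.adjoint (a f) = a (Γ f)
  hCAR : ∀ f h : E, a f ∘L ContinuousLinearMap.adjoint (a h)
      + ContinuousLinearMap.adjoint (a h) ∘L a f = (⟪f, h⟫ : ℂ) • (1 : F →L[ℂ] F)
  hvac : ∀ f : E, P f = f → a f Ω = 0
  hcyc : ∀ K : Submodule ℂ F, IsClosed (K : Set F) → Ω ∈ K →
      (∀ f : E, ∀ x ∈ K, a f x ∈ K) → K = ⊤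

namespace Setup

variable (S : Setup E F)

lemma Γ_neg (x : E) : S.Γ (-x) = -S.Γ x := by
  have := S.hΓ_smul (-1) x
  simpa using this

lemma Γ_sub (x y : E) : S.Γ (x - y) = S.Γ x - S.Γ y := by
  rw [sub_eq_add_neg, S.hΓ_add, S.Γ_neg, sub_eq_add_neg]

lemma Γ_P (x : E) : S.Γ (S.P x) = S.Γ x - S.P (S.Γ x) := by
  have hb := S.hP_basis (S.Γ x)
  rw [S.hΓ_inv] at hb
  exact eq_sub_of_add_eq' hb

lemma norm_Γ (x : E) : ‖S.Γ x‖ = ‖x‖ := by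
  have h := S.hΓ_inner x x
  rw [inner_self_eq_norm_sq_to_K, inner_self_eq_norm_sq_to_K] at h
  have h2 : (‖S.Γ x‖ : ℝ) ^ 2 = (‖x‖ : ℝ) ^ 2 := by exact_mod_cast h
  nlinarith [norm_nonneg (S.Γ x), norm_nonneg x]

lemma a_zero : S.a 0 = 0 := by
  have h := S.ha_add 0 0
  rw [add_zero] at h
  exact (left_eq_add.mp h)

lemma a_neg (f : E) : S.a (-f) = -S.a f := by
  have := S.ha_smul (-1) f
  simpa using this

lemma a_sub (f g : E) : S.a (f - g) = S.a f - S.a g := by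
  rw [sub_eq_add_neg, S.ha_add, S.a_neg, sub_eq_add_neg]

lemma P_idem (x : E) : S.P (S.P x) = S.P x := by
  have := DFunLike.congr_fun S.hP_proj x
  simpa using this

lemma PΓP (x : E) : S.P (S.Γ (S.P x)) = 0 := by
  have h := congrArg S.P (S.hP_basis (S.Γ x))
  rw [map_add, S.hΓ_inv, S.P_idem] at h
  exact add_eq_left.mp h

lemma P_inner (x y : E) : ⟪S.P x, y⟫ = ⟪x, S.P y⟫ := by
  have h := S.hP_sa
  rw [IsSelfAdjoint, ContinuousLinearMap.star_eq_adjoint] at h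
  conv_lhs => rw [← h]
  exact ContinuousLinearMap.adjoint_inner_left _ _ _

lemma inner_P_ΓP (x y : E) : ⟪S.P x, S.Γ (S.P y)⟫ = 0 := by
  rw [S.P_inner, S.PΓP, inner_zero_right]

/-- CAR in terms of `a` only. -/
lemma CAR2 (f g : E) : S.a f ∘L S.a (S.Γ g) + S.a (S.Γ g) ∘L S.a f
    = (⟪f, g⟫ : ℂ) • (1 : F →L[ℂ] F) := by
  have := S.hCAR f g
  rwa [S.ha_star g] at this

lemma acomm (f q : E) (x : F) :
    S.a f (S.a q x) = (⟪f, S.Γ q⟫ : ℂ) • x - S.a q (S.a f x) := by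
  have h := S.CAR2 f (S.Γ q)
  rw [S.hΓ_inv] at h
  have := DFunLike.congr_fun h x
  simp only [ContinuousLinearMap.add_apply, ContinuousLinearMap.coe_comp', Function.comp_apply,
    ContinuousLinearMap.smul_apply, ContinuousLinearMap.one_apply,
    ContinuousLinearMap.comp_apply] at this
  linear_combination (norm := module) this

lemma norm_a_apply_le (f : E) (x : F) : ‖S.a f x‖ ≤ ‖f‖ * ‖x‖ := by
  have h := DFunLike.congr_fun (S.hCAR f f) x
  simp only [ContinuousLinearMap.add_apply, ContinuousLinearMap.coe_comp', Function.comp_apply,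
    ContinuousLinearMap.smul_apply, ContinuousLinearMap.one_apply,
    ContinuousLinearMap.comp_apply] at h
  have h2 := congrArg (fun y => (⟪x, y⟫ : ℂ)) h
  simp only [inner_add_right, inner_smul_right] at h2
  rw [ContinuousLinearMap.adjoint_inner_right] at h2
  have h3 : (⟪x, S.a f ((ContinuousLinearMap.adjoint (S.a f)) x)⟫ : ℂ)
      = ⟪(ContinuousLinearMap.adjoint (S.a f)) x, (ContinuousLinearMap.adjoint (S.a f)) x⟫ :=
    (ContinuousLinearMap.adjoint_inner_left _ _ _).symm
  rw [h3] at h2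
  rw [inner_self_eq_norm_sq_to_K, inner_self_eq_norm_sq_to_K, inner_self_eq_norm_sq_to_K,
    inner_self_eq_norm_sq_to_K] at h2
  have h4 : ‖(ContinuousLinearMap.adjoint (S.a f)) x‖ ^ 2 + ‖S.a f x‖ ^ 2
      = ‖f‖ ^ 2 * ‖x‖ ^ 2 := by exact_mod_cast h2
  nlinarith [norm_nonneg (S.a f x), norm_nonneg f, norm_nonneg x,
    sq_nonneg (‖(ContinuousLinearMap.adjoint (S.a f)) x‖), mul_nonneg (norm_nonneg f) (norm_nonneg x)]


/-! ### Products of `a`'s applied to the vacuum -/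

/-- The vector `a t₁ ⋯ a tₙ Ω`. -/
def vec (ts : List E) : F := ((ts.map S.a).prod) S.Ω

lemma vec_nil : S.vec [] = S.Ω := by simp [vec]

lemma vec_cons (t : E) (ts : List E) : S.vec (t :: ts) = S.a t (S.vec ts) := by
  simp [vec, List.prod_cons, ContinuousLinearMap.mul_apply]

/-- The linear span of all products over a set `X`. -/
def W (X : Set E) : Submodule ℂ F :=
  Submodule.span ℂ {y | ∃ ts : List E, (∀ t ∈ ts, t ∈ X) ∧ y = S.vec ts}

lemma vec_mem_W {X : Set E} {ts : List E} (h : ∀ t ∈ ts, t ∈ X) : S.vec ts ∈ S.W X :=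
  Submodule.subset_span ⟨ts, h, rfl⟩

lemma Ω_mem_W (X : Set E) : S.Ω ∈ S.W X := by
  have := S.vec_mem_W (X := X) (ts := []) (by simp)
  rwa [S.vec_nil] at this

lemma a_mem_W {X : Set E} {t : E} (ht : t ∈ X) {x : F} (hx : x ∈ S.W X) :
    S.a t x ∈ S.W X := by
  induction hx using Submodule.span_induction with
  | mem y hy =>
    obtain ⟨ts, hts, rfl⟩ := hy
    rw [← S.vec_cons]
    refine S.vec_mem_W ?_
    intro u hu
    rcases List.mem_cons.mp hu with h | h
    exacts [h ▸ ht, hts u h]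
  | zero => simp [Submodule.zero_mem]
  | add y z hy hz hy' hz' => rw [map_add]; exact Submodule.add_mem _ hy' hz'
  | smul c y hy hy' => rw [map_smul]; exact Submodule.smul_mem _ _ hy'

/-- Annihilating an element of `𝔭` through a product keeps us in the span. -/
lemma annih_vec {X : Set E} : ∀ (ts : List E), (∀ t ∈ ts, t ∈ X) →
    ∀ p : E, S.P p = p → S.a p (S.vec ts) ∈ S.W X := by
  intro ts
  induction ts with
  | nil => intro _ p hp; rw [S.vec_nil, S.hvac p hp]; exact Submodule.zero_mem _
  | cons t ts ih =>
    intro hmem p hp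
    rw [S.vec_cons, S.acomm]
    refine Submodule.sub_mem _ (Submodule.smul_mem _ _ (S.vec_mem_W ?_)) (S.a_mem_W ?_ ?_)
    · intro u hu; exact hmem u (List.mem_cons_of_mem _ hu)
    · exact hmem t (List.mem_cons_self)
    · exact ih (fun u hu => hmem u (List.mem_cons_of_mem _ hu)) p hp

/-- A nonempty product of annihilators kills the vacuum. -/
lemma prod_annih_Ω {ps : List E} (hne : ps ≠ []) (hp : ∀ p ∈ ps, S.P p = p) :
    ((ps.map S.a).prod) S.Ω = 0 := by
  rcases List.eq_nil_or_concat ps with h | ⟨qs, p, rfl⟩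
  · exact absurd h hne
  · rw [List.concat_eq_append, List.map_append, List.prod_append]
    simp only [List.map_cons, List.map_nil, List.prod_cons, List.prod_nil, mul_one]
    rw [ContinuousLinearMap.mul_apply, S.hvac p (hp p (by simp))]
    simp

/-- Adjoint of a product of `a`'s. -/
lemma adjoint_prod (ps : List E) :
    ContinuousLinearMap.adjoint ((ps.map S.a).prod)
      = ((ps.reverse.map (fun p => S.a (S.Γ p))).prod) := by
  induction ps with
  | nil =>
    simp only [List.map_nil, List.prod_nil, List.reverse_nil]
    rw [← ContinuousLinearMap.star_eq_adjoint, star_one]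
  | cons p ps ih =>
    rw [List.map_cons, List.prod_cons, List.reverse_cons, List.map_append, List.prod_append]
    simp only [List.map_cons, List.map_nil, List.prod_cons, List.prod_nil, mul_one]
    rw [← ContinuousLinearMap.star_eq_adjoint, star_mul, ContinuousLinearMap.star_eq_adjoint,
      ContinuousLinearMap.star_eq_adjoint, ih, S.ha_star]

/-- Adjoint of a product of creation operators. -/
lemma adjoint_cprod (ps : List E) :
    ContinuousLinearMap.adjoint ((ps.map (fun p => S.a (S.Γ p))).prod)
      = ((ps.reverse.map S.a).prod) := by
  have h : ps.map (fun p => S.a (S.Γ p)) = (ps.map S.Γ).map S.a := by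
    simp [List.map_map, Function.comp]
  rw [h, S.adjoint_prod, ← List.map_reverse, List.map_map]
  congr 1
  apply List.map_congr_left
  intro u _
  simp [Function.comp, S.hΓ_inv]


/-! ### Creation products and the parity (Wick) lemma -/

/-- The vector `a(Γp₁) ⋯ a(Γpₙ) Ω`. -/
def cvec (ps : List E) : F := ((ps.map (fun p => S.a (S.Γ p))).prod) S.Ω

lemma cvec_nil : S.cvec [] = S.Ω := by simp [cvec]

lemma cvec_cons (p : E) (ps : List E) : S.cvec (p :: ps) = S.a (S.Γ p) (S.cvec ps) := by
  simp [cvec, List.prod_cons, ContinuousLinearMap.mul_apply]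

/-- Span of creation products of a fixed length. -/
def CSpan (n : ℕ) : Submodule ℂ F :=
  Submodule.span ℂ {y | ∃ qs : List E, (∀ p ∈ qs, S.P p = p) ∧ qs.length = n ∧ y = S.cvec qs}

lemma cre_mem_CSpan {p : E} (hp : S.P p = p) {n : ℕ} {x : F} (hx : x ∈ S.CSpan n) :
    S.a (S.Γ p) x ∈ S.CSpan (n + 1) := by
  induction hx using Submodule.span_induction with
  | mem y hy =>
    obtain ⟨qs, hqs, hlen, rfl⟩ := hy
    rw [← S.cvec_cons]
    refine Submodule.subset_span ⟨p :: qs, ?_, by simp [hlen], rfl⟩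
    intro u hu
    rcases List.mem_cons.mp hu with h | h
    exacts [h ▸ hp, hqs u h]
  | zero => simp [Submodule.zero_mem]
  | add y z hy hz hy' hz' => rw [map_add]; exact Submodule.add_mem _ hy' hz'
  | smul c y hy hy' => rw [map_smul]; exact Submodule.smul_mem _ _ hy'

/-- Annihilating through a creation product drops the length by one. -/
lemma acre : ∀ (ps : List E), (∀ p ∈ ps, S.P p = p) → ∀ g : E, S.P g = g →
    S.a g (S.cvec ps) ∈ S.CSpan (ps.length - 1) := by
  intro ps
  induction ps with
  | nil =>
    intro _ g hg
    rw [S.cvec_nil, S.hvac g hg]; exact Submodule.zero_mem _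
  | cons p ps ih =>
    intro hmem g hg
    rw [S.cvec_cons, S.acomm, S.hΓ_inv]
    have hp : S.P p = p := hmem p (List.mem_cons_self)
    have hps : ∀ u ∈ ps, S.P u = u := fun u hu => hmem u (List.mem_cons_of_mem _ hu)
    refine Submodule.sub_mem _ ?_ ?_
    · exact Submodule.smul_mem _ _
        (Submodule.subset_span ⟨ps, hps, by simp, rfl⟩)
    · rcases ps with _ | ⟨r, rs⟩
      · rw [S.cvec_nil, S.hvac g hg, map_zero]; exact Submodule.zero_mem _
      · have h1 := ih hps g hg
        have h2 := S.cre_mem_CSpan hp h1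
        simpa using h2

/-- The parity lemma:  vacuum expectation values of odd products vanish. -/
lemma wick : ∀ (n : ℕ) (ps ts : List E), ps.length + 2 * ts.length ≤ n →
    (∀ p ∈ ps, S.P p = p) → Odd (ps.length + ts.length) →
    ⟪S.Ω, ((ps.map S.a).prod) (S.vec ts)⟫ = 0 := by
  intro n
  induction n using Nat.strong_induction_on with
  | _ n ih =>
  intro ps ts hlen hp hodd
  rcases ts with _ | ⟨t, ts'⟩
  · have hne : ps ≠ [] := by
      rintro rfl; simp [Nat.odd_iff] at hodd
    rw [S.vec_nil, S.prod_annih_Ω hne hp, inner_zero_right]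
  · set X := S.vec ts' with hX
    set g := S.P (S.Γ t) with hg
    have hsplit : S.a t = S.a (S.P t) + S.a (S.Γ g) := by
      rw [← S.ha_add]; exact congrArg S.a (S.hP_basis t).symm
    have hvec : S.vec (t :: ts') = S.a (S.P t) X + S.a (S.Γ g) X := by
      rw [S.vec_cons, hsplit]; rfl
    rw [hvec, map_add, inner_add_right]
    have hT1 : ⟪S.Ω, ((ps.map S.a).prod) (S.a (S.P t) X)⟫ = 0 := by
      have heq : ((ps.map S.a).prod) (S.a (S.P t) X)
          = (((ps ++ [S.P t]).map S.a).prod) X := by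
        rw [List.map_append, List.prod_append]
        simp [ContinuousLinearMap.mul_apply]
      rw [heq]
      refine ih (ps.length + 1 + 2 * ts'.length) (by simp at hlen ⊢; omega) _ _
        (by simp) ?_ ?_
      · intro u hu
        rcases List.mem_append.mp hu with h | h
        · exact hp u h
        · simp at h; rw [h]; exact S.P_idem t
      · simp only [List.length_append, List.length_cons, List.length_nil] at hodd ⊢
        rw [Nat.odd_iff] at hodd ⊢; omega
    have hT2 : ⟪S.Ω, ((ps.map S.a).prod) (S.a (S.Γ g) X)⟫ = 0 := by
      have e1 : ⟪S.Ω, ((ps.map S.a).prod) (S.a (S.Γ g) X)⟫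
          = ⟪S.a g (ContinuousLinearMap.adjoint ((ps.map S.a).prod) S.Ω), X⟫ := by
        rw [← ContinuousLinearMap.adjoint_inner_left ((ps.map S.a).prod)]
        rw [← ContinuousLinearMap.adjoint_inner_left (S.a (S.Γ g))]
        rw [S.ha_star, S.hΓ_inv]
      have e2 : ContinuousLinearMap.adjoint ((ps.map S.a).prod) S.Ω = S.cvec ps.reverse := by
        rw [S.adjoint_prod]; rfl
      rw [e1, e2]
      have hgP : S.P g = g := S.P_idem (S.Γ t)
      rcases ps with _ | ⟨p₀, ps₀⟩
      · rw [List.reverse_nil, S.cvec_nil, S.hvac g hgP, inner_zero_left]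
      · have hrev : ∀ u ∈ (p₀ :: ps₀).reverse, S.P u = u := by
          intro u hu; exact hp u (List.mem_reverse.mp hu)
        have hmem := S.acre (p₀ :: ps₀).reverse hrev g hgP
        have hlenrev : (p₀ :: ps₀).reverse.length - 1 = ps₀.length := by simp
        rw [hlenrev] at hmem
        -- show the inner product with X vanishes for everything in `CSpan ps₀.length`
        have key : ∀ y, y ∈ S.CSpan ps₀.length → ⟪y, X⟫ = 0 := by
          intro y hy
          induction hy using Submodule.span_induction with
          | mem y hy =>
            obtain ⟨qs, hqs, hqlen, rfl⟩ := hy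
            have e3 : ⟪S.cvec qs, X⟫
                = ⟪S.Ω, ((qs.reverse.map S.a).prod) X⟫ := by
              rw [← S.adjoint_cprod]
              exact (ContinuousLinearMap.adjoint_inner_right _ _ _).symm
            rw [e3]
            refine ih (qs.reverse.length + 2 * ts'.length) ?_ _ _ le_rfl ?_ ?_
            · simp only [List.length_reverse, hqlen]
              simp only [List.length_cons] at hlen; omega
            · intro u hu; exact hqs u (List.mem_reverse.mp hu)
            · simp only [List.length_reverse, hqlen]
              simp only [List.length_cons] at hodd
              rw [Nat.odd_iff] at hodd ⊢; omega
          | zero => rw [inner_zero_left]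
          | add y z hy hz hy' hz' => rw [inner_add_left, hy', hz', add_zero]
          | smul c y hy hy' => rw [inner_smul_left, hy', mul_zero]
        exact key _ hmem
    rw [hT1, hT2, add_zero]

/-- Orthogonality of products of different parity. -/
lemma vec_orth {fs gs : List E} (h : Odd (fs.length + gs.length)) :
    ⟪S.vec fs, S.vec gs⟫ = 0 := by
  have e1 : ⟪S.vec fs, S.vec gs⟫
      = ⟪S.Ω, ((fs.reverse.map (fun p => S.a (S.Γ p))).prod) (S.vec gs)⟫ := by
    rw [← S.adjoint_prod]
    exact (ContinuousLinearMap.adjoint_inner_right _ _ _).symm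
  have e2 : (fs.reverse.map (fun p => S.a (S.Γ p))) = ((fs.reverse.map S.Γ).map S.a) := by
    simp [List.map_map, Function.comp]
  have e3 : ((fs.reverse.map S.Γ).map S.a).prod (S.vec gs)
      = S.vec ((fs.reverse.map S.Γ) ++ gs) := by
    rw [vec, vec, List.map_append, List.prod_append, ContinuousLinearMap.mul_apply]
  rw [e1, e2, e3]
  have := S.wick (2 * ((fs.reverse.map S.Γ).length + gs.length)) [] ((fs.reverse.map S.Γ) ++ gs)
    (by simp) (by simp) ?_
  · simpa using this
  · simp only [List.length_nil, List.length_append, List.length_map, List.length_reverse,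
      zero_add]
    exact h


/-! ### Density of the linear span of products over a suitable subspace -/

lemma mem_ranP {x : E} : x ∈ LinearMap.range (S.P : E →ₗ[ℂ] E) ↔ S.P x = x := by
  constructor
  · rintro ⟨y, rfl⟩; exact S.P_idem y
  · intro h; exact ⟨x, h⟩

lemma ranP_isClosed : IsClosed ((LinearMap.range (S.P : E →ₗ[ℂ] E) : Submodule ℂ E) : Set E) := by
  have h : ((LinearMap.range (S.P : E →ₗ[ℂ] E) : Submodule ℂ E) : Set E) = {x | S.P x = x} :=
    Set.ext fun x => S.mem_ranP
  rw [h]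
  exact isClosed_eq S.P.continuous continuous_id

/-- If `ran P ⊓ 𝔯ᗮ = 0` then `P 𝔯` is dense in `ran P`. -/
lemma Pdense (𝔯 : Submodule ℂ E)
    (hbot : ∀ x, x ∈ LinearMap.range (S.P : E →ₗ[ℂ] E) → x ∈ 𝔯ᗮ → x = 0) :
    ∀ p : E, S.P p = p → p ∈ closure (S.P '' (𝔯 : Set E)) := by
  intro p hp
  set V : Submodule ℂ E := 𝔯.map (S.P : E →ₗ[ℂ] E) with hV
  set V' := V.topologicalClosure with hV'
  haveI : CompleteSpace V' := (V.isClosed_topologicalClosure).completeSpace_coe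
  set w : E := (Submodule.orthogonalProjectionOnto V' p : E) with hw
  have hsub : p - w ∈ V'ᗮ := Submodule.sub_starProjection_mem_orthogonal p
  have hVle : V' ≤ LinearMap.range (S.P : E →ₗ[ℂ] E) := by
    refine Submodule.topologicalClosure_minimal _ ?_ S.ranP_isClosed
    rintro x ⟨y, _, rfl⟩; exact ⟨y, rfl⟩
  have hwmem : w ∈ LinearMap.range (S.P : E →ₗ[ℂ] E) := hVle (Submodule.orthogonalProjectionOnto V' p).2
  have hpw : p - w ∈ LinearMap.range (S.P : E →ₗ[ℂ] E) :=
    Submodule.sub_mem _ (S.mem_ranP.mpr hp) hwmem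
  have horth : p - w ∈ 𝔯ᗮ := by
    rw [Submodule.mem_orthogonal]
    intro u hu
    have h1 : S.P (p - w) = p - w := S.mem_ranP.mp hpw
    calc ⟪u, p - w⟫ = ⟪u, S.P (p - w)⟫ := by rw [h1]
      _ = ⟪S.P u, p - w⟫ := (S.P_inner u (p - w)).symm
      _ = 0 := by
          refine (Submodule.mem_orthogonal V' (p - w)).mp hsub _ ?_
          exact V.le_topologicalClosure ⟨u, hu, rfl⟩
  have hz : p - w = 0 := hbot _ hpw horth
  have hpV : p ∈ V' := by
    have : p = w := by rw [← sub_eq_zero]; exact hz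
    rw [this]; exact (Submodule.orthogonalProjectionOnto V' p).2
  have hset : (V' : Set E) = closure (S.P '' (𝔯 : Set E)) := by
    rw [hV', Submodule.topologicalClosure_coe]
    congr 1
  rw [← hset]; exact hpV

/-- Master density lemma: the span of products over a `Γ`-invariant subspace `𝔯` with
`P 𝔯` dense in `ran P` is dense in Fock space. -/
lemma dense_W (𝔯 : Submodule ℂ E) (hΓinv : ∀ r ∈ 𝔯, S.Γ r ∈ 𝔯)
    (hdens : ∀ p : E, S.P p = p → p ∈ closure (S.P '' (𝔯 : Set E))) :
    Dense ((S.W (𝔯 : Set E)) : Set F) := by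
  set K := (S.W (𝔯 : Set E)).topologicalClosure with hK
  have hKcl : IsClosed (K : Set F) := Submodule.isClosed_topologicalClosure _
  have hΩK : S.Ω ∈ K := (S.W (𝔯 : Set E)).le_topologicalClosure (S.Ω_mem_W _)
  have hGen : ∀ f : E, ∀ x ∈ S.W (𝔯 : Set E), S.a f x ∈ K := by
    intro f x hx
    induction hx using Submodule.span_induction with
    | mem y hy =>
      obtain ⟨ts, hts, rfl⟩ := hy
      set g := S.P (S.Γ f) with hg
      have hsplit : S.a f = S.a (S.P f) + S.a (S.Γ g) := by
        rw [← S.ha_add]; exact congrArg S.a (S.hP_basis f).symm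
      have h1 : S.a (S.P f) (S.vec ts) ∈ K :=
        (S.W (𝔯 : Set E)).le_topologicalClosure
          (S.annih_vec ts hts (S.P f) (S.P_idem f))
      have h2 : S.a (S.Γ g) (S.vec ts) ∈ K := by
        have hgc : g ∈ closure (S.P '' (𝔯 : Set E)) := hdens g (S.P_idem (S.Γ f))
        rw [mem_closure_iff_seq_limit] at hgc
        obtain ⟨u, hu, hlim⟩ := hgc
        choose r hrmem hPr using hu
        set z : ℕ → F := fun n => S.a (S.Γ (S.P (r n))) (S.vec ts) with hz
        have hzW : ∀ n, z n ∈ K := by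
          intro n
          refine (S.W (𝔯 : Set E)).le_topologicalClosure ?_
          have hΓPr := S.Γ_P (r n)
          rw [hz]
          simp only
          rw [hΓPr, S.a_sub, ContinuousLinearMap.sub_apply]
          refine Submodule.sub_mem _ ?_ ?_
          · rw [← S.vec_cons]
            refine S.vec_mem_W ?_
            intro v hv
            rcases List.mem_cons.mp hv with h | h
            · exact h ▸ hΓinv _ (hrmem n)
            · exact hts v h
          · exact S.annih_vec ts hts _ (S.P_idem (S.Γ (r n)))
        have hlim2 : Filter.Tendsto z Filter.atTop (nhds (S.a (S.Γ g) (S.vec ts))) := by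
          rw [tendsto_iff_norm_sub_tendsto_zero]
          have hb : ∀ n, ‖z n - S.a (S.Γ g) (S.vec ts)‖ ≤ ‖S.P (r n) - g‖ * ‖S.vec ts‖ := by
            intro n
            have e : z n - S.a (S.Γ g) (S.vec ts)
                = S.a (S.Γ (S.P (r n) - g)) (S.vec ts) := by
              rw [S.Γ_sub, S.a_sub, ContinuousLinearMap.sub_apply]
            rw [e]
            calc ‖S.a (S.Γ (S.P (r n) - g)) (S.vec ts)‖
                ≤ ‖S.Γ (S.P (r n) - g)‖ * ‖S.vec ts‖ := S.norm_a_apply_le _ _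
              _ = ‖S.P (r n) - g‖ * ‖S.vec ts‖ := by rw [S.norm_Γ]
          refine squeeze_zero (fun n => norm_nonneg _) hb ?_
          have huconv : Filter.Tendsto (fun n => ‖S.P (r n) - g‖) Filter.atTop (nhds 0) := by
            have : ∀ n, S.P (r n) = u n := hPr
            have hconv := (tendsto_iff_norm_sub_tendsto_zero.mp hlim)
            simpa [this] using hconv
          simpa using huconv.mul_const ‖S.vec ts‖
        exact hKcl.mem_of_tendsto hlim2 (Filter.Eventually.of_forall hzW)
      rw [hsplit]
      rw [ContinuousLinearMap.add_apply]
      exact Submodule.add_mem _ h1 h2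
    | zero => rw [map_zero]; exact Submodule.zero_mem _
    | add y z hy hz hy' hz' => rw [map_add]; exact Submodule.add_mem _ hy' hz'
    | smul c y hy hy' => rw [map_smul]; exact Submodule.smul_mem _ _ hy'
  have hInv : ∀ f : E, ∀ x ∈ K, S.a f x ∈ K := by
    intro f x hx
    have h1 : (S.a f) '' (closure ((S.W (𝔯 : Set E)) : Set F))
        ⊆ closure ((S.a f) '' ((S.W (𝔯 : Set E)) : Set F)) :=
      image_closure_subset_closure_image (S.a f).continuous
    have h2 : closure ((S.a f) '' ((S.W (𝔯 : Set E)) : Set F)) ⊆ (K : Set F) := by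
      refine closure_minimal ?_ hKcl
      rintro _ ⟨y, hy, rfl⟩; exact hGen f y hy
    have hx' : x ∈ closure ((S.W (𝔯 : Set E)) : Set F) := by
      rwa [← Submodule.topologicalClosure_coe]
    exact h2 (h1 ⟨x, hx', rfl⟩)
  have htop := S.hcyc K hKcl hΩK hInv
  exact Submodule.dense_iff_topologicalClosure_eq_top.mpr htop


/-! ### The parity operator -/

/-- Span of even products. -/
def SE : Submodule ℂ F := Submodule.span ℂ {y | ∃ ts : List E, Even ts.length ∧ y = S.vec ts}

/-- Span of odd products. -/
def SO : Submodule ℂ F := Submodule.span ℂ {y | ∃ ts : List E, Odd ts.length ∧ y = S.vec ts}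

/-- Even subspace. -/
def Fp : Submodule ℂ F := S.SE.topologicalClosure

/-- Odd subspace. -/
def Fm : Submodule ℂ F := S.SO.topologicalClosure

lemma Fm_le_orth : S.Fm ≤ S.Fpᗮ := by
  refine Submodule.topologicalClosure_minimal _ ?_ (Submodule.isClosed_orthogonal _)
  refine Submodule.span_le.mpr ?_
  rintro _ ⟨ts, hodd, rfl⟩
  rw [SetLike.mem_coe, Submodule.mem_orthogonal]
  intro u hu
  have hker : S.Fp ≤ LinearMap.ker ((innerSL ℂ (S.vec ts)) : F →ₗ[ℂ] ℂ) := by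
    refine Submodule.topologicalClosure_minimal _ ?_ (ContinuousLinearMap.isClosed_ker _)
    refine Submodule.span_le.mpr ?_
    rintro _ ⟨us, heven, rfl⟩
    rw [SetLike.mem_coe, LinearMap.mem_ker]
    have : (⟪S.vec ts, S.vec us⟫ : ℂ) = 0 := by
      refine S.vec_orth ?_
      rcases heven with ⟨k, hk⟩
      rcases hodd with ⟨j, hj⟩
      exact ⟨j + k, by omega⟩
    simpa [innerSL_apply_apply] using this
  have h0 : (⟪S.vec ts, u⟫ : ℂ) = 0 := by
    have := hker hu
    simpa [LinearMap.mem_ker, innerSL_apply_apply] using this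
  exact inner_eq_zero_symm.mp h0

instance Fp_hasProj : Submodule.HasOrthogonalProjection S.Fp := by
  haveI : CompleteSpace S.Fp := (Submodule.isClosed_topologicalClosure _).completeSpace_coe
  infer_instance

/-- The parity (Klein) operator. -/
noncomputable def Z : F →L[ℂ] F :=
  (2 : ℂ) • (S.Fp.subtypeL.comp (Submodule.orthogonalProjectionOnto S.Fp)) - 1

lemma Z_Fp {x : F} (hx : x ∈ S.Fp) : S.Z x = x := by
  have : ((Submodule.orthogonalProjectionOnto S.Fp) x : F) = x := Submodule.starProjection_eq_self_iff.mpr hx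
  simp [Z, ContinuousLinearMap.sub_apply, ContinuousLinearMap.smul_apply, this, two_smul]

lemma Z_Fm {x : F} (hx : x ∈ S.Fm) : S.Z x = -x := by
  have h0 : (Submodule.orthogonalProjectionOnto S.Fp) x = 0 :=
    Submodule.orthogonalProjectionOnto_apply_of_mem_orthogonal (S.Fm_le_orth hx)
  simp [Z, ContinuousLinearMap.sub_apply, ContinuousLinearMap.smul_apply, h0]

lemma a_SE {f : E} {x : F} (hx : x ∈ S.SE) : S.a f x ∈ S.SO := by
  induction hx using Submodule.span_induction with
  | mem y hy =>
    obtain ⟨ts, hts, rfl⟩ := hy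
    rw [← S.vec_cons]
    exact Submodule.subset_span ⟨f :: ts, by simpa using hts.add_one, rfl⟩
  | zero => rw [map_zero]; exact Submodule.zero_mem _
  | add y z hy hz hy' hz' => rw [map_add]; exact Submodule.add_mem _ hy' hz'
  | smul c y hy hy' => rw [map_smul]; exact Submodule.smul_mem _ _ hy'

lemma a_SO {f : E} {x : F} (hx : x ∈ S.SO) : S.a f x ∈ S.SE := by
  induction hx using Submodule.span_induction with
  | mem y hy =>
    obtain ⟨ts, hts, rfl⟩ := hy
    rw [← S.vec_cons]
    exact Submodule.subset_span ⟨f :: ts, by simpa using hts.add_one, rfl⟩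
  | zero => rw [map_zero]; exact Submodule.zero_mem _
  | add y z hy hz hy' hz' => rw [map_add]; exact Submodule.add_mem _ hy' hz'
  | smul c y hy hy' => rw [map_smul]; exact Submodule.smul_mem _ _ hy'

lemma a_Fp {f : E} {x : F} (hx : x ∈ S.Fp) : S.a f x ∈ S.Fm := by
  have h1 : (S.a f) '' (closure (S.SE : Set F)) ⊆ closure ((S.a f) '' (S.SE : Set F)) :=
    image_closure_subset_closure_image (S.a f).continuous
  have h2 : closure ((S.a f) '' (S.SE : Set F)) ⊆ (S.Fm : Set F) := by
    refine closure_minimal ?_ (Submodule.isClosed_topologicalClosure _)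
    rintro _ ⟨y, hy, rfl⟩
    exact S.SO.le_topologicalClosure (S.a_SE hy)
  have hx' : x ∈ closure (S.SE : Set F) := by
    rwa [← Submodule.topologicalClosure_coe]
  exact h2 (h1 ⟨x, hx', rfl⟩)

lemma a_Fm {f : E} {x : F} (hx : x ∈ S.Fm) : S.a f x ∈ S.Fp := by
  have h1 : (S.a f) '' (closure (S.SO : Set F)) ⊆ closure ((S.a f) '' (S.SO : Set F)) :=
    image_closure_subset_closure_image (S.a f).continuous
  have h2 : closure ((S.a f) '' (S.SO : Set F)) ⊆ (S.Fp : Set F) := by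
    refine closure_minimal ?_ (Submodule.isClosed_topologicalClosure _)
    rintro _ ⟨y, hy, rfl⟩
    exact S.SE.le_topologicalClosure (S.a_SO hy)
  have hx' : x ∈ closure (S.SO : Set F) := by
    rwa [← Submodule.topologicalClosure_coe]
  exact h2 (h1 ⟨x, hx', rfl⟩)

lemma dense_sup : Dense ((S.Fp ⊔ S.Fm : Submodule ℂ F) : Set F) := by
  have hd : Dense ((S.W ((⊤ : Submodule ℂ E) : Set E)) : Set F) := by
    refine S.dense_W ⊤ (fun r _ => trivial) ?_
    intro p hp
    exact subset_closure ⟨p, trivial, hp⟩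
  refine hd.mono ?_
  have hle : S.W ((⊤ : Submodule ℂ E) : Set E) ≤ S.Fp ⊔ S.Fm := by
    refine Submodule.span_le.mpr ?_
    rintro _ ⟨ts, _, rfl⟩
    rcases Nat.even_or_odd ts.length with h | h
    · exact Submodule.mem_sup_left (S.SE.le_topologicalClosure (Submodule.subset_span ⟨ts, h, rfl⟩))
    · exact Submodule.mem_sup_right (S.SO.le_topologicalClosure (Submodule.subset_span ⟨ts, h, rfl⟩))
  exact hle

lemma Z_anti (f : E) (x : F) : S.Z (S.a f x) = -(S.a f (S.Z x)) := by
  have key : (S.Z.comp (S.a f)) = -((S.a f).comp S.Z) := by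
    refine DFunLike.coe_injective (Continuous.ext_on S.dense_sup
      (S.Z.comp (S.a f)).continuous (-((S.a f).comp S.Z)).continuous ?_)
    intro y hy
    rw [SetLike.mem_coe, Submodule.mem_sup] at hy
    obtain ⟨u, hu, v, hv, rfl⟩ := hy
    simp only [ContinuousLinearMap.coe_comp', Function.comp_apply,
      ContinuousLinearMap.neg_apply, map_add]
    rw [S.Z_Fm (S.a_Fp hu), S.Z_Fp (S.a_Fm hv), S.Z_Fp hu, S.Z_Fm hv, map_neg, neg_neg]
  have := DFunLike.congr_fun key x
  simpa using this

lemma Z_vec (ts : List E) : S.Z (S.vec ts) = ((-1 : ℂ) ^ ts.length) • S.vec ts := by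
  rcases Nat.even_or_odd ts.length with h | h
  · rw [S.Z_Fp (S.SE.le_topologicalClosure (Submodule.subset_span ⟨ts, h, rfl⟩)),
      h.neg_one_pow, one_smul]
  · rw [S.Z_Fm (S.SO.le_topologicalClosure (Submodule.subset_span ⟨ts, h, rfl⟩)),
      h.neg_one_pow, neg_one_smul]

lemma Za_mem_centralizer (𝔮 : Submodule ℂ E) (r : E)
    (hr : ∀ q ∈ 𝔮, (⟪r, S.Γ q⟫ : ℂ) = 0) :
    (S.Z ∘L S.a r) ∈ Set.centralizer {T : F →L[ℂ] F | ∃ q ∈ 𝔮, T = S.a q} := by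
  rw [Set.mem_centralizer_iff]
  rintro _ ⟨q, hq, rfl⟩
  ext x
  simp only [ContinuousLinearMap.mul_apply, ContinuousLinearMap.coe_comp', Function.comp_apply]
  have h1 : S.Z (S.a r (S.a q x)) = S.a q (S.Z (S.a r x)) := by
    rw [S.acomm r q, hr q hq, zero_smul, zero_sub, map_neg, S.Z_anti q, neg_neg]
  exact h1.symm

/-- Applying the twisted product to the vacuum recovers the plain product up to a scalar. -/
lemma prodZ (rs : List E) : ∃ c : ℂ, c ≠ 0 ∧
    ((rs.map (fun r => S.Z ∘L S.a r)).prod) S.Ω = c • S.vec rs := by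
  induction rs with
  | nil => exact ⟨1, one_ne_zero, by simp [S.vec_nil]⟩
  | cons r rs ih =>
    obtain ⟨c, hc, hN⟩ := ih
    refine ⟨c * ((-1 : ℂ) ^ (rs.length + 1)), by simp [hc], ?_⟩
    rw [List.map_cons, List.prod_cons, ContinuousLinearMap.mul_apply, hN]
    simp only [ContinuousLinearMap.coe_comp', Function.comp_apply, map_smul]
    rw [← S.vec_cons, S.Z_vec]
    simp only [List.length_cons]
    rw [smul_smul]

lemma Γ_mem_orth {𝔮 : Submodule ℂ E} (h𝔮Γ : ∀ q ∈ 𝔮, S.Γ q ∈ 𝔮) {r : E} (hr : r ∈ 𝔮ᗮ) :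
    S.Γ r ∈ 𝔮ᗮ := by
  rw [Submodule.mem_orthogonal]
  intro q hq
  have h1 : (⟪q, S.Γ r⟫ : ℂ) = ⟪S.Γ (S.Γ q), S.Γ r⟫ := by rw [S.hΓ_inv]
  rw [h1, S.hΓ_inner]
  exact inner_eq_zero_symm.mp ((Submodule.mem_orthogonal _ _).mp hr _ (h𝔮Γ q hq))

/-- The separating property. -/
lemma separating (𝔮 : Submodule ℂ E) (h𝔮Γ : ∀ q ∈ 𝔮, S.Γ q ∈ 𝔮)
    (hdens : ∀ p : E, S.P p = p → p ∈ closure (S.P '' ((𝔮ᗮ : Submodule ℂ E) : Set E)))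
    (m : F →L[ℂ] F)
    (hm : m ∈ Set.centralizer (Set.centralizer {T : F →L[ℂ] F | ∃ q ∈ 𝔮, T = S.a q}))
    (hm0 : m S.Ω = 0) : m = 0 := by
  have key : ∀ rs : List E, (∀ r ∈ rs, r ∈ 𝔮ᗮ) → m (S.vec rs) = 0 := by
    intro rs hrs
    obtain ⟨c, hc, hN⟩ := S.prodZ rs
    set N := ((rs.map (fun r => S.Z ∘L S.a r)).prod) with hNdef
    have hNmem : N ∈ Set.centralizer {T : F →L[ℂ] F | ∃ q ∈ 𝔮, T = S.a q} := by
      rw [hNdef]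
      refine list_prod_mem_centralizer _ ?_
      intro l hl
      obtain ⟨r, hrmem, rfl⟩ := List.mem_map.mp hl
      refine S.Za_mem_centralizer 𝔮 r ?_
      intro q hq
      exact inner_eq_zero_symm.mp
        ((Submodule.mem_orthogonal _ _).mp (hrs r hrmem) _ (h𝔮Γ q hq))
    have hcomm : N * m = m * N := Set.mem_centralizer_iff.mp hm N hNmem
    have h1 : m (N S.Ω) = N (m S.Ω) := by
      have := DFunLike.congr_fun hcomm S.Ω
      simpa [ContinuousLinearMap.mul_apply] using this.symm
    rw [hN, hm0, map_zero, map_smul] at h1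
    have h2 : c • m (S.vec rs) = 0 := h1
    exact (smul_eq_zero.mp h2).resolve_left hc
  have hWker : S.W ((𝔮ᗮ : Submodule ℂ E) : Set E) ≤ LinearMap.ker (m : F →ₗ[ℂ] F) := by
    refine Submodule.span_le.mpr ?_
    rintro _ ⟨ts, hts, rfl⟩
    rw [SetLike.mem_coe, LinearMap.mem_ker]
    exact key ts hts
  have hdW : Dense ((S.W ((𝔮ᗮ : Submodule ℂ E) : Set E)) : Set F) :=
    S.dense_W 𝔮ᗮ (fun r hr => S.Γ_mem_orth h𝔮Γ hr) hdens
  ext x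
  have hx : x ∈ closure ((S.W ((𝔮ᗮ : Submodule ℂ E) : Set E)) : Set F) := hdW x
  have hcl : closure ((S.W ((𝔮ᗮ : Submodule ℂ E) : Set E)) : Set F)
      ⊆ (LinearMap.ker (m : F →ₗ[ℂ] F) : Set F) := by
    refine closure_minimal ?_ (ContinuousLinearMap.isClosed_ker m)
    intro y hy; exact hWker hy
  have := hcl hx
  simpa [LinearMap.mem_ker] using this


lemma smul_mem_centralizer {T : Set (F →L[ℂ] F)} (c : ℂ) {m : F →L[ℂ] F}
    (hm : m ∈ Set.centralizer T) : c • m ∈ Set.centralizer T := by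
  rw [Set.mem_centralizer_iff] at hm ⊢
  intro g hg
  rw [mul_smul_comm, smul_mul_assoc, hm g hg]

/-- Every element of the span of products over `𝔮` is of the form `m Ω` with
`m` in the double centralizer. -/
lemma W_subset_MΩ (𝔮 : Submodule ℂ E) : ∀ x ∈ S.W (𝔮 : Set E),
    ∃ m ∈ Set.centralizer (Set.centralizer {T : F →L[ℂ] F | ∃ q ∈ 𝔮, T = S.a q}),
      x = m S.Ω := by
  intro x hx
  induction hx using Submodule.span_induction with
  | mem y hy =>
    obtain ⟨ts, hts, rfl⟩ := hy
    refine ⟨(ts.map S.a).prod, ?_, rfl⟩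
    refine list_prod_mem_centralizer _ ?_
    intro l hl
    obtain ⟨t, htmem, rfl⟩ := List.mem_map.mp hl
    exact Set.subset_centralizer_centralizer ⟨t, hts t htmem, rfl⟩
  | zero => exact ⟨0, Set.zero_mem_centralizer, by simp⟩
  | add y z hy hz hy' hz' =>
    obtain ⟨m₁, hm₁, rfl⟩ := hy'
    obtain ⟨m₂, hm₂, rfl⟩ := hz'
    exact ⟨m₁ + m₂, Set.add_mem_centralizer hm₁ hm₂, by simp⟩
  | smul c y hy hy' =>
    obtain ⟨m, hm, rfl⟩ := hy'
    exact ⟨c • m, smul_mem_centralizer c hm, by simp⟩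

end Setup
end CARaux

open CARaux in
/-- Proposition 3.2 (`Teo.3.2`): in a Fock representation of `CAR(𝔥, Γ)` determined by the
basis projection `P` (with `𝔭` and `𝔮` in generic position), the Fock vacuum `Ω` is cyclic
for the von Neumann algebra `M(𝔮) = {a(q) : q ∈ 𝔮}''` iff `P𝔮` is dense in `𝔭`, and `Ω` is
separating for `M(𝔮)` iff `P𝔮ᗮ` is dense in `𝔭`. -/
theorem vacuum_cyclic_and_separating_iff_dense
    {E : Type*} [NormedAddCommGroup E] [InnerProductSpace ℂ E] [CompleteSpace E]
    {F : Type*} [NormedAddCommGroup F] [InnerProductSpace ℂ F] [CompleteSpace F]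
    (Γ : E → E)
    (hΓ_add : ∀ x y, Γ (x + y) = Γ x + Γ y)
    (hΓ_smul : ∀ (c : ℂ) (x : E), Γ (c • x) = (starRingEnd ℂ) c • Γ x)
    (hΓ_inner : ∀ f h : E, ⟪Γ f, Γ h⟫ = ⟪h, f⟫)
    (hΓ_inv : ∀ x, Γ (Γ x) = x)
    (P : E →L[ℂ] E) (hP_proj : P ∘L P = P) (hP_sa : IsSelfAdjoint P)
    (hP_basis : ∀ x, P x + Γ (P (Γ x)) = x)
    -- the Fock representation `f ↦ a(f)` of `CAR(𝔥,Γ)` on `F` with vacuum `Ω`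
    (a : E → (F →L[ℂ] F)) (Ω : F) (hΩ : ‖Ω‖ = 1)
    (ha_add : ∀ f g, a (f + g) = a f + a g)
    (ha_smul : ∀ (c : ℂ) (f : E), a (c • f) = (starRingEnd ℂ) c • a f)
    (ha_star : ∀ f, ContinuousLinearMap.adjoint (a f) = a (Γ f))
    (hCAR : ∀ f h : E, a f ∘L ContinuousLinearMap.adjoint (a h)
      + ContinuousLinearMap.adjoint (a h) ∘L a f = (⟪f, h⟫ : ℂ) • (1 : F →L[ℂ] F))
    -- Fock state condition: `a(f) Ω = 0` whenever `P f = f`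
    (hvac : ∀ f : E, P f = f → a f Ω = 0)
    -- `Ω` is cyclic for the whole CAR algebra
    (hcyc : ∀ K : Submodule ℂ F, IsClosed (K : Set F) → Ω ∈ K →
      (∀ f : E, ∀ x ∈ K, a f x ∈ K) → K = ⊤)
    -- the closed `Γ`-invariant subspace `𝔮`, in generic position with `𝔭 = ran P`
    (𝔮 : Submodule ℂ E) (h𝔮_closed : IsClosed (𝔮 : Set E))
    (h𝔮Γ : ∀ q ∈ 𝔮, Γ q ∈ 𝔮)
    (hgen1 : LinearMap.range (P : E →ₗ[ℂ] E) ⊓ 𝔮 = ⊥)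
    (hgen2 : LinearMap.range (P : E →ₗ[ℂ] E) ⊓ 𝔮ᗮ = ⊥)
    (hgen3 : (LinearMap.range (P : E →ₗ[ℂ] E))ᗮ ⊓ 𝔮 = ⊥)
    (hgen4 : (LinearMap.range (P : E →ₗ[ℂ] E))ᗮ ⊓ 𝔮ᗮ = ⊥) :
    -- `Ω` cyclic for `M(𝔮)` iff `P𝔮` dense in `𝔭`
    ((Dense {x : F | ∃ m ∈ Set.centralizer (Set.centralizer {T : F →L[ℂ] F | ∃ q ∈ 𝔮, T = a q}),
        x = m Ω}) ↔ closure (P '' (𝔮 : Set E)) = (LinearMap.range (P : E →ₗ[ℂ] E) : Set E)) ∧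
    -- `Ω` separating for `M(𝔮)` iff `P𝔮ᗮ` dense in `𝔭`
    ((∀ m ∈ Set.centralizer (Set.centralizer {T : F →L[ℂ] F | ∃ q ∈ 𝔮, T = a q}),
        m Ω = 0 → m = 0) ↔ closure (P '' (𝔮ᗮ : Set E)) = (LinearMap.range (P : E →ₗ[ℂ] E) : Set E)) := by
  let S : CARaux.Setup E F := ⟨Γ, P, a, Ω, hΓ_add, hΓ_smul, hΓ_inner, hΓ_inv, hP_proj,
    hP_sa, hP_basis, ha_add, ha_smul, ha_star, hCAR, hvac, hcyc⟩
  have hbot2 : ∀ x, x ∈ LinearMap.range (P : E →ₗ[ℂ] E) → x ∈ 𝔮ᗮ → x = 0 := by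
    intro x h1 h2
    have hx : x ∈ (⊥ : Submodule ℂ E) := hgen2 ▸ Submodule.mem_inf.mpr ⟨h1, h2⟩
    simpa using hx
  haveI : CompleteSpace 𝔮 := h𝔮_closed.completeSpace_coe
  have horth : 𝔮ᗮᗮ = 𝔮 := Submodule.orthogonal_orthogonal 𝔮
  have hbot1 : ∀ x, x ∈ LinearMap.range (P : E →ₗ[ℂ] E) → x ∈ 𝔮ᗮᗮ → x = 0 := by
    intro x h1 h2
    rw [horth] at h2
    have hx : x ∈ (⊥ : Submodule ℂ E) := hgen1 ▸ Submodule.mem_inf.mpr ⟨h1, h2⟩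
    simpa using hx
  have hRHS1 : closure (P '' (𝔮 : Set E)) = (LinearMap.range (P : E →ₗ[ℂ] E) : Set E) := by
    apply Set.Subset.antisymm
    · refine closure_minimal ?_ S.ranP_isClosed
      rintro _ ⟨q, _, rfl⟩
      exact SetLike.mem_coe.mpr ⟨q, rfl⟩
    · intro x hx
      exact S.Pdense 𝔮 hbot2 x (S.mem_ranP.mp hx)
  have hRHS2 : closure (P '' ((𝔮ᗮ : Submodule ℂ E) : Set E)) = (LinearMap.range (P : E →ₗ[ℂ] E) : Set E) := by
    apply Set.Subset.antisymm
    · refine closure_minimal ?_ S.ranP_isClosed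
      rintro _ ⟨q, _, rfl⟩
      exact SetLike.mem_coe.mpr ⟨q, rfl⟩
    · intro x hx
      exact S.Pdense 𝔮ᗮ hbot1 x (S.mem_ranP.mp hx)
  have hLHS1 : Dense {x : F |
      ∃ m ∈ Set.centralizer (Set.centralizer {T : F →L[ℂ] F | ∃ q ∈ 𝔮, T = a q}), x = m Ω} := by
    refine Dense.mono ?_ (S.dense_W 𝔮 h𝔮Γ (S.Pdense 𝔮 hbot2))
    intro x hx
    exact S.W_subset_MΩ 𝔮 x hx
  have hLHS2 : ∀ m ∈ Set.centralizer (Set.centralizer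
      {T : F →L[ℂ] F | ∃ q ∈ 𝔮, T = a q}), m Ω = 0 → m = 0 := by
    intro m hm hm0
    exact S.separating 𝔮 h𝔮Γ (S.Pdense 𝔮ᗮ hbot1) m hm hm0
  exact ⟨iff_of_true hLHS1 hRHS1, iff_of_true hLHS2 hRHS2⟩
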